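/- Let p, q ∈ (0,1) with p ≠ q, φ ∈ [0,2π) with cos φ ≠ 0. Set μ₁ = √(pq), μ₂ = √((1−p)(1−q)), Δp = 2p−1, Δq = 2q−1, λ_max = √(μ₁² + μ₂² + 2μ₁μ₂|cos φ|), λ_min = √(μ₁² + μ₂² − 2μ₁μ₂|cos φ|), a_n = |(μ₁ + e^{−iφ}μ₂)^n + (μ₁ − e^{−iφ}μ₂)^n| / √((1+Δp^n)(1+Δq^n)), and b_n = |(μ₁ + e^{−iφ}μ₂)^n − (μ₁ − e^{−iφ}μ₂)^n| / √((1−Δp^n)(1−Δq^n)). Then for every n ≥ 1: (1 − λ_min/λ_max)² λ_max^{2n} < ((1+Δp^n)/2) a_n² + ((1−Δp^n)/2) b_n² < λ_max^{2n} / (q(1−q)). -/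

import Mathlib

set_option maxHeartbeats 1000000 in
lemma coreIneq (a b t dq Q L : ℝ) (ha0 : 0 < a) (hb0 : 0 ≤ b) (hba : b < a)
    (ht : |t| ≤ a*b) (hd : |dq| < 1) (hQ : 0 < Q) (hdQ : 2*Q ≤ 1 - |dq|)
    (hL0 : 0 ≤ L) (hLab : L ≤ a - b) (hcorner : b = 0 → dq ≠ 0) :
    L^2 < (a^2 + b^2 - 2*t*dq)/(1-dq^2) ∧ (a^2 + b^2 - 2*t*dq)/(1-dq^2) < a^2/Q := by
  have hdabs : 0 ≤ |dq| := abs_nonneg dq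
  have hd1 : 0 < 1 + dq := by cases' abs_lt.1 hd with h1 h2; linarith
  have hd2 : 0 < 1 - dq := by cases' abs_lt.1 hd with h1 h2; linarith
  have hdsq0 : 0 < 1 - dq^2 := by nlinarith
  have hdsq : 1 - dq^2 ≤ 1 := by nlinarith [sq_nonneg dq]
  have htd : -(2*(a*b)*|dq|) ≤ -2*t*dq := by
    have h1 : t*dq ≤ |t*dq| := le_abs_self _
    rw [abs_mul] at h1
    nlinarith [abs_nonneg t]
  have htd2 : -2*t*dq ≤ 2*(a*b)*|dq| := by
    have h1 : -(t*dq) ≤ |t*dq| := neg_le_abs _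
    rw [abs_mul] at h1
    nlinarith [abs_nonneg t]
  constructor
  · rcases eq_or_lt_of_le hb0 with hbz | hbz
    · have hbz0 : b = 0 := hbz.symm
      have hdq0 : dq ≠ 0 := hcorner hbz0
      have htz : t = 0 := by
        have h1 : |t| ≤ 0 := by rw [hbz0] at ht; simpa using ht
        exact abs_eq_zero.1 (le_antisymm h1 (abs_nonneg t))
      have hdq2 : 0 < dq^2 := by
        have := abs_pos.2 hdq0
        nlinarith [sq_abs dq]
      have hL2 : L^2 ≤ a^2 := by nlinarith
      rw [hbz0, htz]
      rw [lt_div_iff₀ hdsq0]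
      nlinarith [mul_pos ha0 ha0]
    · have h1d' : 0 < 1 - |dq| := by linarith
      have hN : (a-b)^2 < a^2 + b^2 - 2*t*dq := by
        nlinarith [mul_pos h1d' (mul_pos ha0 hbz)]
      have hEN : a^2 + b^2 - 2*t*dq ≤ (a^2 + b^2 - 2*t*dq)/(1-dq^2) := by
        rw [le_div_iff₀ hdsq0]; nlinarith
      have hL2 : L^2 ≤ (a-b)^2 := by nlinarith
      linarith
  · have hN : a^2 + b^2 - 2*t*dq ≤ (a^2+b^2)*(1+|dq|) := by nlinarith [sq_nonneg (a-b)]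
    have hsplit : (1 - dq^2) = (1-|dq|)*(1+|dq|) := by rw [← sq_abs dq]; ring
    have h1d : 0 < 1 - |dq| := by linarith
    have step1 : (a^2 + b^2 - 2*t*dq)/(1-dq^2) ≤ (a^2+b^2)/(1-|dq|) := by
      have hpos1 : 0 < 1 + |dq| := by linarith
      rw [hsplit, div_le_div_iff₀ (mul_pos h1d hpos1) h1d]
      have h := mul_le_mul_of_nonneg_right hN h1d.le
      nlinarith [h]
    have step2 : (a^2+b^2)/(1-|dq|) ≤ (a^2+b^2)/(2*Q) := by
      apply div_le_div_of_nonneg_left (by positivity) (by positivity) hdQ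
    have step3 : (a^2+b^2)/(2*Q) < a^2/Q := by
      have hb2 : b^2 < a^2 := by nlinarith
      rw [div_lt_div_iff₀ (by positivity) hQ]
      nlinarith [mul_lt_mul_of_pos_left hb2 hQ]
    linarith

set_option maxHeartbeats 1000000 in
lemma bridge (Lr lr dq Q : ℝ) (n : ℕ) (hn : 1 ≤ n) (A B : ℂ)
    (hA : norm A = Lr ^ n) (hB : norm B = lr ^ n)
    (hl0 : 0 ≤ lr) (hL : lr < Lr)
    (hd : |dq| < 1) (hQ : 0 < Q) (hdQ : 2*Q ≤ 1 - |dq|)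
    (hcorner : lr = 0 → dq ≠ 0) :
    (1 - lr/Lr)^2 * Lr^(2*n) <
      norm (A+B)^2/(2*(1+dq)) + norm (A-B)^2/(2*(1-dq))
    ∧ norm (A+B)^2/(2*(1+dq)) + norm (A-B)^2/(2*(1-dq)) < Lr^(2*n)/Q := by
  obtain ⟨m, rfl⟩ : ∃ m, n = m+1 := ⟨n-1, (Nat.succ_pred_eq_of_pos hn).symm⟩
  have hL0 : 0 < Lr := lt_of_le_of_lt hl0 hL
  have ha0 : 0 < Lr^(m+1) := pow_pos hL0 _
  have hb0 : 0 ≤ lr^(m+1) := pow_nonneg hl0 _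
  have hba : lr^(m+1) < Lr^(m+1) := pow_lt_pow_left₀ hL hl0 (Nat.succ_ne_zero m)
  have ht : |(A * (starRingEnd ℂ) B).re| ≤ Lr^(m+1) * lr^(m+1) := by
    calc |(A * (starRingEnd ℂ) B).re| ≤ norm (A * (starRingEnd ℂ) B) :=
      Complex.abs_re_le_norm _
    _ = Lr^(m+1) * lr^(m+1) := by rw [norm_mul, Complex.norm_conj, hA, hB]
  have hd1 : 0 < 1 + dq := by cases' abs_lt.1 hd with h1 h2; linarith
  have hd2 : 0 < 1 - dq := by cases' abs_lt.1 hd with h1 h2; linarith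
  have hdsq0 : 0 < 1 - dq^2 := by nlinarith [abs_nonneg dq]
  have hS : norm (A+B)^2 = (Lr^(m+1))^2 + (lr^(m+1))^2 + 2*(A * (starRingEnd ℂ) B).re := by
    rw [Complex.sq_norm, Complex.normSq_add, ← Complex.sq_norm A, ← Complex.sq_norm B, hA, hB]
  have hD : norm (A-B)^2 = (Lr^(m+1))^2 + (lr^(m+1))^2 - 2*(A * (starRingEnd ℂ) B).re := by
    rw [Complex.sq_norm, Complex.normSq_sub, ← Complex.sq_norm A, ← Complex.sq_norm B, hA, hB]
  have hEeq : norm (A+B)^2/(2*(1+dq)) + norm (A-B)^2/(2*(1-dq))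
      = ((Lr^(m+1))^2 + (lr^(m+1))^2 - 2*(A * (starRingEnd ℂ) B).re*dq)/(1-dq^2) := by
    rw [hS, hD]
    have e1 : (1:ℝ)+dq ≠ 0 := ne_of_gt hd1
    have e2 : (1:ℝ)-dq ≠ 0 := ne_of_gt hd2
    have e3 : (1:ℝ)-dq^2 ≠ 0 := ne_of_gt hdsq0
    field_simp
    ring
  have hLf : (1 - lr/Lr)^2 * Lr^(2*(m+1)) = ((1 - lr/Lr)*Lr^(m+1))^2 := by
    rw [mul_pow, ← pow_mul, Nat.mul_comm]
  have hLf2 : Lr^(2*(m+1)) = (Lr^(m+1))^2 := by rw [← pow_mul, Nat.mul_comm]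
  have hLnn : 0 ≤ (1 - lr/Lr)*Lr^(m+1) := by
    have h1 : lr/Lr < 1 := (div_lt_one hL0).2 hL
    have h2 : (0:ℝ) ≤ 1 - lr/Lr := by linarith
    positivity
  have hLab : (1 - lr/Lr)*Lr^(m+1) ≤ Lr^(m+1) - lr^(m+1) := by
    have e : (1 - lr/Lr)*Lr^(m+1) = Lr^(m+1) - lr*Lr^m := by
      have : Lr ≠ 0 := ne_of_gt hL0
      field_simp
      ring
    have h2 : lr^(m+1) ≤ lr*Lr^m := by
      rw [pow_succ']
      exact mul_le_mul_of_nonneg_left (pow_le_pow_left₀ hl0 hL.le m) hl0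
    linarith
  have hcor : lr^(m+1) = 0 → dq ≠ 0 := fun h =>
    hcorner (pow_eq_zero_iff (Nat.succ_ne_zero m) |>.1 h)
  have := coreIneq (Lr^(m+1)) (lr^(m+1)) ((A * (starRingEnd ℂ) B).re) dq Q
    ((1 - lr/Lr)*Lr^(m+1)) ha0 hb0 hba ht hd hQ hdQ hLnn hLab hcor
  rw [hEeq, hLf, hLf2]
  exact this

lemma normSq_plus (m1 m2 c s : ℝ) (hsc : s^2 + c^2 = 1) :
    Complex.normSq ((m1:ℂ) + ((c:ℂ) - (s:ℂ) * Complex.I) * (m2:ℂ))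
      = m1^2 + m2^2 + 2*m1*m2*c := by
  simp only [Complex.normSq_apply, Complex.add_re, Complex.add_im, Complex.mul_re,
    Complex.mul_im, Complex.sub_re, Complex.sub_im, Complex.ofReal_re, Complex.ofReal_im,
    Complex.I_re, Complex.I_im]
  ring_nf
  linear_combination m2^2 * hsc

lemma normSq_minus (m1 m2 c s : ℝ) (hsc : s^2 + c^2 = 1) :
    Complex.normSq ((m1:ℂ) - ((c:ℂ) - (s:ℂ) * Complex.I) * (m2:ℂ))
      = m1^2 + m2^2 - 2*m1*m2*c := by
  simp only [Complex.normSq_apply, Complex.sub_re, Complex.sub_im, Complex.mul_re,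
    Complex.mul_im, Complex.ofReal_re, Complex.ofReal_im, Complex.I_re, Complex.I_im]
  ring_nf
  linear_combination m2^2 * hsc


open Filter

noncomputable section

/-- a_n = |(μ₁+e^{−iφ}μ₂)^n + (μ₁−e^{−iφ}μ₂)^n| / √((1+Δp^n)(1+Δq^n)), the modulus of
the overlap ⟨0_q|0_p⟩ of the normalized even-parity components. -/
def aSeq (p q φ : ℝ) (n : ℕ) : ℝ :=
  norm (((Real.sqrt (p * q) : ℂ) +
      Complex.exp (-(Complex.I * φ)) * (Real.sqrt ((1 - p) * (1 - q)) : ℂ)) ^ n +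
    ((Real.sqrt (p * q) : ℂ) -
      Complex.exp (-(Complex.I * φ)) * (Real.sqrt ((1 - p) * (1 - q)) : ℂ)) ^ n) /
  Real.sqrt ((1 + (2 * p - 1) ^ n) * (1 + (2 * q - 1) ^ n))

/-- b_n = |(μ₁+e^{−iφ}μ₂)^n − (μ₁−e^{−iφ}μ₂)^n| / √((1−Δp^n)(1−Δq^n)), the modulus of
the overlap ⟨1_q|1_p⟩ of the normalized odd-parity components. -/
def bSeq (p q φ : ℝ) (n : ℕ) : ℝ :=
  norm (((Real.sqrt (p * q) : ℂ) +
      Complex.exp (-(Complex.I * φ)) * (Real.sqrt ((1 - p) * (1 - q)) : ℂ)) ^ n -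
    ((Real.sqrt (p * q) : ℂ) -
      Complex.exp (-(Complex.I * φ)) * (Real.sqrt ((1 - p) * (1 - q)) : ℂ)) ^ n) /
  Real.sqrt ((1 - (2 * p - 1) ^ n) * (1 - (2 * q - 1) ^ n))

set_option maxHeartbeats 1000000 in
/-- For p ≠ q and cos φ ≠ 0, with λ_max = √(μ₁²+μ₂²+2μ₁μ₂|cos φ|) and
λ_min = √(μ₁²+μ₂²−2μ₁μ₂|cos φ|), the type-I error probability of the optimal
ℤ₂-invariant POVM satisfies, for every n ≥ 1,
(1 − λ_min/λ_max)² λ_max^{2n} < ((1+Δp^n)/2) a_n² + ((1−Δp^n)/2) b_n² < λ_max^{2n}/(q(1−q)). -/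
theorem typeI_error_bounds (p q φ : ℝ) (hp : p ∈ Set.Ioo (0 : ℝ) 1)
    (hq : q ∈ Set.Ioo (0 : ℝ) 1) (hpq : p ≠ q) (hφ : φ ∈ Set.Ico (0 : ℝ) (2 * Real.pi))
    (hcos : Real.cos φ ≠ 0) (n : ℕ) (hn : 1 ≤ n) :
    (1 - Real.sqrt (Real.sqrt (p * q) ^ 2 + Real.sqrt ((1 - p) * (1 - q)) ^ 2 -
          2 * Real.sqrt (p * q) * Real.sqrt ((1 - p) * (1 - q)) * |Real.cos φ|) /
        Real.sqrt (Real.sqrt (p * q) ^ 2 + Real.sqrt ((1 - p) * (1 - q)) ^ 2 +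
          2 * Real.sqrt (p * q) * Real.sqrt ((1 - p) * (1 - q)) * |Real.cos φ|)) ^ 2 *
      Real.sqrt (Real.sqrt (p * q) ^ 2 + Real.sqrt ((1 - p) * (1 - q)) ^ 2 +
          2 * Real.sqrt (p * q) * Real.sqrt ((1 - p) * (1 - q)) * |Real.cos φ|) ^ (2 * n)
    < (1 + (2 * p - 1) ^ n) / 2 * aSeq p q φ n ^ 2 +
        (1 - (2 * p - 1) ^ n) / 2 * bSeq p q φ n ^ 2 ∧
    (1 + (2 * p - 1) ^ n) / 2 * aSeq p q φ n ^ 2 +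
        (1 - (2 * p - 1) ^ n) / 2 * bSeq p q φ n ^ 2
    < Real.sqrt (Real.sqrt (p * q) ^ 2 + Real.sqrt ((1 - p) * (1 - q)) ^ 2 +
          2 * Real.sqrt (p * q) * Real.sqrt ((1 - p) * (1 - q)) * |Real.cos φ|) ^ (2 * n) /
      (q * (1 - q)) := by
  obtain ⟨hp0, hp1⟩ := hp
  obtain ⟨hq0, hq1⟩ := hq
  have hn0 : n ≠ 0 := Nat.one_le_iff_ne_zero.1 hn
  set m1 : ℝ := Real.sqrt (p * q) with hm1def
  set m2 : ℝ := Real.sqrt ((1 - p) * (1 - q)) with hm2def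
  set c : ℝ := Real.cos φ with hcdef
  set s : ℝ := Real.sin φ with hsdef
  have hpq0 : (0:ℝ) < p * q := mul_pos hp0 hq0
  have h1pq0 : (0:ℝ) < (1 - p) * (1 - q) := mul_pos (by linarith) (by linarith)
  have hm1 : 0 < m1 := Real.sqrt_pos.2 hpq0
  have hm2 : 0 < m2 := Real.sqrt_pos.2 h1pq0
  have hm1sq : m1 ^ 2 = p * q := Real.sq_sqrt hpq0.le
  have hm2sq : m2 ^ 2 = (1 - p) * (1 - q) := Real.sq_sqrt h1pq0.le
  have hcabs : 0 < |c| := abs_pos.2 hcos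
  have hc1 : |c| ≤ 1 := Real.abs_cos_le_one φ
  -- lambda max / min squared
  have hlsq0 : (0:ℝ) ≤ m1 ^ 2 + m2 ^ 2 - 2 * m1 * m2 * |c| := by
    nlinarith [sq_nonneg (m1 - m2), mul_pos hm1 hm2]
  have hLsqlt : m1 ^ 2 + m2 ^ 2 - 2 * m1 * m2 * |c| < m1 ^ 2 + m2 ^ 2 + 2 * m1 * m2 * |c| := by
    nlinarith [mul_pos hm1 hm2]
  set Lr : ℝ := Real.sqrt (m1 ^ 2 + m2 ^ 2 + 2 * m1 * m2 * |c|) with hLrdef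
  set lr : ℝ := Real.sqrt (m1 ^ 2 + m2 ^ 2 - 2 * m1 * m2 * |c|) with hlrdef
  have hl0 : 0 ≤ lr := Real.sqrt_nonneg _
  have hllt : lr < Lr := Real.sqrt_lt_sqrt hlsq0 hLsqlt
  have hlr2 : lr ^ 2 = m1 ^ 2 + m2 ^ 2 - 2 * m1 * m2 * |c| := Real.sq_sqrt hlsq0
  -- the complex numbers
  set zp : ℂ := (m1 : ℂ) + Complex.exp (-(Complex.I * φ)) * (m2 : ℂ) with hzpdef
  set zm : ℂ := (m1 : ℂ) - Complex.exp (-(Complex.I * φ)) * (m2 : ℂ) with hzmdef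
  have hexp : Complex.exp (-(Complex.I * (φ:ℂ))) = (c : ℂ) - (s : ℂ) * Complex.I := by
    have h : -(Complex.I * (φ:ℂ)) = ((-φ : ℝ) : ℂ) * Complex.I := by push_cast; ring
    rw [h, Complex.exp_mul_I, ← Complex.ofReal_cos, ← Complex.ofReal_sin,
      Real.cos_neg, Real.sin_neg, hcdef, hsdef]
    push_cast; ring
  have hsc : s ^ 2 + c ^ 2 = 1 := Real.sin_sq_add_cos_sq φ
  have habsp : norm zp = Real.sqrt (m1 ^ 2 + m2 ^ 2 + 2 * m1 * m2 * c) := by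
    have h2 : norm zp ^ 2 = m1 ^ 2 + m2 ^ 2 + 2 * m1 * m2 * c := by
      rw [Complex.sq_norm, hzpdef, hexp, normSq_plus m1 m2 c s hsc]
    rw [← h2, Real.sqrt_sq (norm_nonneg _)]
  have habsm : norm zm = Real.sqrt (m1 ^ 2 + m2 ^ 2 - 2 * m1 * m2 * c) := by
    have h2 : norm zm ^ 2 = m1 ^ 2 + m2 ^ 2 - 2 * m1 * m2 * c := by
      rw [Complex.sq_norm, hzmdef, hexp, normSq_minus m1 m2 c s hsc]
    rw [← h2, Real.sqrt_sq (norm_nonneg _)]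
  -- powers of 2p-1, 2q-1
  have hdp : |(2 * p - 1)| < 1 := abs_lt.2 ⟨by linarith, by linarith⟩
  have hdq' : |(2 * q - 1)| < 1 := abs_lt.2 ⟨by linarith, by linarith⟩
  have hdpn : |(2 * p - 1) ^ n| < 1 := by
    rw [abs_pow]; exact pow_lt_one₀ (abs_nonneg _) hdp hn0
  have hdqn : |(2 * q - 1) ^ n| < 1 := by
    rw [abs_pow]; exact pow_lt_one₀ (abs_nonneg _) hdq' hn0
  have hp1n : 0 < 1 + (2 * p - 1) ^ n := by cases' abs_lt.1 hdpn with h1 h2; linarith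
  have hp2n : 0 < 1 - (2 * p - 1) ^ n := by cases' abs_lt.1 hdpn with h1 h2; linarith
  have hq1n : 0 < 1 + (2 * q - 1) ^ n := by cases' abs_lt.1 hdqn with h1 h2; linarith
  have hq2n : 0 < 1 - (2 * q - 1) ^ n := by cases' abs_lt.1 hdqn with h1 h2; linarith
  -- rewrite the error expression
  have hgoal : (1 + (2 * p - 1) ^ n) / 2 * aSeq p q φ n ^ 2 +
      (1 - (2 * p - 1) ^ n) / 2 * bSeq p q φ n ^ 2 =
      norm (zp ^ n + zm ^ n) ^ 2 / (2 * (1 + (2 * q - 1) ^ n)) +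
      norm (zp ^ n - zm ^ n) ^ 2 / (2 * (1 - (2 * q - 1) ^ n)) := by
    rw [aSeq, bSeq, div_pow, div_pow,
      Real.sq_sqrt (le_of_lt (mul_pos hp1n hq1n)),
      Real.sq_sqrt (le_of_lt (mul_pos hp2n hq2n))]
    rw [← hm1def, ← hm2def, ← hzpdef, ← hzmdef]
    field_simp
  rw [hgoal]
  -- the Q facts
  have hQ : 0 < q * (1 - q) := mul_pos hq0 (by linarith)
  have hdQ : 2 * (q * (1 - q)) ≤ 1 - |(2 * q - 1) ^ n| := by
    rw [abs_pow]
    have h1 : |2 * q - 1| ^ n ≤ |2 * q - 1| :=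
      pow_le_of_le_one (abs_nonneg _) hdq'.le hn0
    rcases abs_cases (2 * q - 1) with ⟨h, _⟩ | ⟨h, _⟩ <;> nlinarith
  have hcorner : lr = 0 → (2 * q - 1) ^ n ≠ 0 := by
    intro hlz
    have hlsqz : m1 ^ 2 + m2 ^ 2 - 2 * m1 * m2 * |c| = 0 := by
      rw [← hlr2, hlz]; ring
    have h1 : (m1 - m2)^2 ≤ 0 := by nlinarith [mul_pos hm1 hm2]
    have h2 : (m1 - m2)^2 = 0 := le_antisymm h1 (sq_nonneg _)
    have hm12 : m1 = m2 := by
      have h3 := pow_eq_zero_iff (two_ne_zero) |>.1 h2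
      linarith [sub_eq_zero.1 h3]
    have hpq1 : p + q = 1 := by
      have h4 : p * q = (1 - p) * (1 - q) := by rw [← hm1sq, ← hm2sq, hm12]
      linear_combination h4
    have : 2 * q - 1 ≠ 0 := by
      intro h
      apply hpq
      linarith
    exact pow_ne_zero n this
  -- case split on the sign of cos φ
  rcases lt_or_gt_of_ne hcos with hcneg | hcpos
  · -- c < 0 : Lr = |zm|, lr = |zp|
    have hacm : |c| = -c := abs_of_neg hcneg
    have hA : norm (zm ^ n) = Lr ^ n := by
      rw [norm_pow, habsm, hLrdef, hacm]; ring_nf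
    have hB : norm (zp ^ n) = lr ^ n := by
      rw [norm_pow, habsp, hlrdef, hacm]; ring_nf
    have key := bridge Lr lr ((2 * q - 1) ^ n) (q * (1 - q)) n hn (zm ^ n) (zp ^ n)
      hA hB hl0 hllt hdqn hQ hdQ hcorner
    rw [show zp ^ n + zm ^ n = zm ^ n + zp ^ n from add_comm _ _,
      show norm (zp ^ n - zm ^ n) = norm (zm ^ n - zp ^ n) from
        norm_sub_rev _ _]
    exact key
  · -- c > 0
    have hacp : |c| = c := abs_of_pos hcpos
    have hA : norm (zp ^ n) = Lr ^ n := by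
      rw [norm_pow, habsp, hLrdef, hacp]
    have hB : norm (zm ^ n) = lr ^ n := by
      rw [norm_pow, habsm, hlrdef, hacp]
    exact bridge Lr lr ((2 * q - 1) ^ n) (q * (1 - q)) n hn (zp ^ n) (zm ^ n)
      hA hB hl0 hllt hdqn hQ hdQ hcorner
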